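/- Corollary 3: when the noise is zero and the transmitters and receivers are at the same height (h = 0), the SINR coverage of a corner user equals that of a center user. Precisely: fix a > 0, β > 0, λ > 0, τ > 0, and use path-loss ℓ₀(x,y) = ‖x−y‖^{−2β} for x ≠ y (the event X_i = y has probability zero). Then C₀(λ, a, τ, (a,a)) = C₀(λ, a, τ, (0,0)), where C₀(λ, a, τ, y) = P(∃ 1 ≤ i ≤ N : ℓ₀(X_i,y) > τ·∑_{1 ≤ j ≤ N, j ≠ i} ℓ₀(X_j,y)) in the mixed-binomial Poisson model with parameters (λ, a). -/

import Mathlib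

open MeasureTheory ProbabilityTheory
open scoped ENNReal

noncomputable section

/-- The plane `ℝ²` with the Euclidean norm. -/
abbrev E2 := EuclideanSpace ℝ (Fin 2)

/-- The closed square of center `c` and half-side `a`. -/
def Sq (c : E2) (a : ℝ) : Set E2 := {x | ∀ i, |x i - c i| ≤ a}

/-- The path-loss between a transmitter at `x` and a receiver at `y` when both are at
the same height (`h = 0`): `ℓ₀(x,y) = ‖x − y‖^{−2β}`. -/
def pl0 (β : ℝ) (x y : E2) : ℝ := ‖x - y‖ ^ (-(2 * β))

/-- The zero-noise, zero-height SIR coverage probability of the mixed-binomial Poisson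
model with transmitter density `lam` and room half-side `a`, at a receiver located at
`y`, with SIR threshold `τ`: the number of transmitters `N` is Poisson with mean `4a²λ`
and, given `N = n`, the transmitters are `n` i.i.d. points uniform on `S(0,a)`; coverage
holds when some transmitter `i` satisfies `ℓ₀(X_i,y) > τ ∑_{j≠i} ℓ₀(X_j,y)`. -/
def cov0 (β lam a τ : ℝ) (y : E2) : ℝ≥0∞ :=
  ∑' n : ℕ,
    ENNReal.ofReal (Real.exp (-(4 * a ^ 2 * lam)) * (4 * a ^ 2 * lam) ^ n / n.factorial) *
      ((Measure.pi fun _ : Fin n => volume.restrict (Sq 0 a))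
          {x : Fin n → E2 | ∃ i,
            pl0 β (x i) y > τ * ((∑ j, pl0 β (x j) y) - pl0 β (x i) y)}
        / (volume (Sq 0 a)) ^ n)

/-- The corner of the room `S(0,a)`, i.e. the point `(a, a)`. -/
def corner (a : ℝ) : E2 := (WithLp.equiv 2 (Fin 2 → ℝ)).symm ![a, a]

/-! ### Auxiliary material for the proof -/

open Set

/-- Pushing the uniform measure on `[-a,a]` forward through `t ↦ a - 2|t|` gives back the
uniform measure on `[-a,a]`. -/
lemma aux_map_fold (a : ℝ) (ha : 0 < a) :
    Measure.map (fun t : ℝ => a - 2 * |t|) (volume.restrict (Icc (-a) a))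
      = volume.restrict (Icc (-a) a) := by
  have hgm : Measurable fun t : ℝ => a - 2 * |t| :=
    measurable_const.sub (measurable_abs.const_mul 2)
  ext s hs
  rw [Measure.map_apply hgm hs, Measure.restrict_apply (hgm hs), Measure.restrict_apply hs]
  set X : Set ℝ := (fun t : ℝ => a - 2 * |t|) ⁻¹' s with hX
  have hsplit : X ∩ Icc (-a) a = (X ∩ Icc (-a) 0) ∪ (X ∩ Icc 0 a) := by
    rw [← inter_union_distrib_left, Icc_union_Icc_eq_Icc (neg_nonpos.mpr ha.le) ha.le]
  have hneg : X ∩ Icc (-a) 0 = (fun t : ℝ => a + 2 * ((1:ℝ) * t)) ⁻¹' (s ∩ Icc (-a) a) := by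
    ext t
    simp only [hX, mem_inter_iff, mem_preimage, mem_Icc, one_mul]
    constructor
    · rintro ⟨h1, h2, h3⟩
      rw [abs_of_nonpos h3] at h1
      refine ⟨?_, by linarith, by linarith⟩
      simpa [sub_neg_eq_add, mul_neg] using h1
    · rintro ⟨h1, h2, h3⟩
      have ht0 : t ≤ 0 := by linarith
      refine ⟨?_, by linarith, ht0⟩
      rw [abs_of_nonpos ht0]
      simpa [mul_neg] using h1
  have hpos : X ∩ Icc 0 a = (fun t : ℝ => a + 2 * ((-1:ℝ) * t)) ⁻¹' (s ∩ Icc (-a) a) := by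
    ext t
    simp only [hX, mem_inter_iff, mem_preimage, mem_Icc, neg_one_mul]
    constructor
    · rintro ⟨h1, h2, h3⟩
      rw [abs_of_nonneg h2] at h1
      refine ⟨by simpa [mul_neg, sub_eq_add_neg] using h1, by linarith, by linarith⟩
    · rintro ⟨h1, h2, h3⟩
      have ht0 : 0 ≤ t := by linarith
      refine ⟨?_, ht0, by linarith⟩
      rw [abs_of_nonneg ht0]
      simpa [mul_neg, sub_eq_add_neg] using h1
  have key : ∀ c : ℝ, c ≠ 0 → volume ((fun t : ℝ => a + 2 * (c * t)) ⁻¹' (s ∩ Icc (-a) a))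
      = ENNReal.ofReal |(2*c)⁻¹| * volume (s ∩ Icc (-a) a) := by
    intro c hc
    have hco : (fun t : ℝ => a + 2 * (c * t))
        = (fun u : ℝ => a + u) ∘ (fun t : ℝ => (2*c) * t) := by
      funext t; simp [Function.comp]; ring
    rw [hco, Set.preimage_comp, Real.volume_preimage_mul_left (by simp [hc] : (2*c) ≠ 0),
      measure_preimage_add]
  have hdisj : AEDisjoint volume (X ∩ Icc (-a) 0) (X ∩ Icc 0 a) := by
    have hsub : (X ∩ Icc (-a) 0) ∩ (X ∩ Icc 0 a) ⊆ {(0:ℝ)} := by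
      rintro t ⟨⟨-, -, h1⟩, -, h2, -⟩
      exact mem_singleton_iff.mpr (le_antisymm h1 h2)
    exact measure_mono_null hsub Real.volume_singleton
  rw [hsplit, measure_union₀ ((hgm hs).inter measurableSet_Icc).nullMeasurableSet hdisj,
    hneg, hpos, key 1 one_ne_zero, key (-1) (by norm_num),
    ← add_mul, ← ENNReal.ofReal_add (abs_nonneg _) (abs_nonneg _),
    show |(2*(1:ℝ))⁻¹| + |(2*(-1:ℝ))⁻¹| = 1 by
      rw [abs_of_nonneg, abs_of_nonpos] <;> norm_num,
    ENNReal.ofReal_one, one_mul]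

/-- The product of restricted measures is the restriction of the product measure. -/
lemma aux_restrict_pi {ι : Type*} [Fintype ι] {α : ι → Type*} [∀ i, MeasurableSpace (α i)]
    (μ : ∀ i, Measure (α i)) [∀ i, SigmaFinite (μ i)] (s : ∀ i, Set (α i))
    (hs : ∀ i, MeasurableSet (s i)) :
    Measure.pi (fun i => (μ i).restrict (s i)) = (Measure.pi μ).restrict (univ.pi s) := by
  have _ : ∀ i, MeasurableSet (s i) := hs
  refine Measure.pi_eq fun t ht => ?_
  rw [Measure.restrict_apply (MeasurableSet.univ_pi ht), ← Set.pi_inter_distrib,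
    Measure.pi_pi]
  exact Finset.prod_congr rfl fun i _ => (Measure.restrict_apply (ht i)).symm

/-- The folding map of the square: coordinatewise `t ↦ a - 2|t|`. -/
def Tmap (a : ℝ) : E2 → E2 := fun x =>
  ((MeasurableEquiv.toLp 2 (Fin 2 → ℝ)).symm).symm fun i =>
    a - 2 * |((MeasurableEquiv.toLp 2 (Fin 2 → ℝ)).symm) x i|

lemma aux_Sq_preimage (a : ℝ) :
    ((MeasurableEquiv.toLp 2 (Fin 2 → ℝ)).symm) ⁻¹' (univ.pi fun _ : Fin 2 => Icc (-a) a)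
      = Sq 0 a := by
  ext x
  simp only [Sq, Set.mem_setOf_eq, mem_preimage, Set.mem_univ_pi, mem_Icc, ← abs_le,
    PiLp.zero_apply, sub_zero]
  rfl

lemma aux_measurableSet_Sq (a : ℝ) : MeasurableSet (Sq 0 a) := by
  rw [← aux_Sq_preimage a]
  exact (MeasurableSet.univ_pi fun _ => measurableSet_Icc).preimage
    ((MeasurableEquiv.toLp 2 (Fin 2 → ℝ)).symm).measurable

/-- The folding map preserves the uniform measure on the square. -/
lemma aux_T_preserving (a : ℝ) (ha : 0 < a) :
    MeasurePreserving (Tmap a) (volume.restrict (Sq 0 a)) (volume.restrict (Sq 0 a)) := by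
  set e := (MeasurableEquiv.toLp 2 (Fin 2 → ℝ)).symm with he
  have hbox : MeasurableSet (univ.pi fun _ : Fin 2 => Icc (-a) a) :=
    MeasurableSet.univ_pi fun _ => measurableSet_Icc
  have h1 : MeasurePreserving e (volume.restrict (Sq 0 a))
      ((volume : Measure (Fin 2 → ℝ)).restrict (univ.pi fun _ : Fin 2 => Icc (-a) a)) := by
    have := (EuclideanSpace.volume_preserving_symm_measurableEquiv_toLp (Fin 2)).restrict_preimage hbox
    rwa [aux_Sq_preimage a] at this
  have h2 : MeasurePreserving (fun (v : Fin 2 → ℝ) i => a - 2 * |v i|)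
      ((volume : Measure (Fin 2 → ℝ)).restrict (univ.pi fun _ : Fin 2 => Icc (-a) a))
      ((volume : Measure (Fin 2 → ℝ)).restrict (univ.pi fun _ : Fin 2 => Icc (-a) a)) := by
    rw [show (volume : Measure (Fin 2 → ℝ)) = Measure.pi fun _ => volume from rfl,
      ← aux_restrict_pi _ _ fun _ => measurableSet_Icc]
    exact MeasureTheory.measurePreserving_pi _ _ fun i =>
      ⟨measurable_const.sub (measurable_abs.const_mul 2), aux_map_fold a ha⟩
  have h3 : MeasurePreserving e.symm
      ((volume : Measure (Fin 2 → ℝ)).restrict (univ.pi fun _ : Fin 2 => Icc (-a) a))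
      (volume.restrict (Sq 0 a)) := by
    have hsymm := ((EuclideanSpace.volume_preserving_symm_measurableEquiv_toLp (Fin 2)).symm
      e).restrict_preimage (aux_measurableSet_Sq a)
    have hpre : e.symm ⁻¹' (Sq 0 a) = univ.pi fun _ : Fin 2 => Icc (-a) a := by
      rw [← aux_Sq_preimage a, ← Set.preimage_comp]
      simp [he]
    rwa [hpre] at hsymm
  exact h3.comp (h2.comp h1)

lemma aux_norm_Tmap (a : ℝ) (x : E2) : ‖Tmap a x - corner a‖ = 2 * ‖x‖ := by
  have hc : ∀ i, (Tmap a x - corner a) i = -(2 * |x i|) := by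
    intro i
    have h1 : (Tmap a x) i = a - 2 * |x i| := rfl
    have h2 : (corner a) i = a := by fin_cases i <;> rfl
    have h3 : (Tmap a x - corner a) i = (Tmap a x) i - (corner a) i := rfl
    rw [h3, h1, h2]; ring
  rw [EuclideanSpace.norm_eq, EuclideanSpace.norm_eq]
  have hsq : ∀ i, ‖(Tmap a x - corner a) i‖ ^ 2 = 4 * ‖x i‖ ^ 2 := by
    intro i
    rw [hc i, Real.norm_eq_abs, Real.norm_eq_abs, abs_neg, abs_mul, abs_abs, abs_two]
    ring
  rw [Finset.sum_congr rfl fun i _ => hsq i, ← Finset.mul_sum,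
    Real.sqrt_mul (by norm_num), show Real.sqrt 4 = 2 by
      rw [show (4:ℝ) = 2^2 by norm_num, Real.sqrt_sq (by norm_num)]]

lemma aux_pl0_Tmap (a β : ℝ) (x : E2) :
    pl0 β (Tmap a x) (corner a) = (2:ℝ) ^ (-(2*β)) * pl0 β x 0 := by
  rw [pl0, pl0, aux_norm_Tmap, sub_zero, Real.mul_rpow (by norm_num) (norm_nonneg _)]

lemma aux_event_preimage (a β τ : ℝ) (n : ℕ) :
    (fun (x : Fin n → E2) i => Tmap a (x i)) ⁻¹'
      {x : Fin n → E2 | ∃ i, pl0 β (x i) (corner a) >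
        τ * ((∑ j, pl0 β (x j) (corner a)) - pl0 β (x i) (corner a))}
    = {x : Fin n → E2 | ∃ i, pl0 β (x i) 0 >
        τ * ((∑ j, pl0 β (x j) 0) - pl0 β (x i) 0)} := by
  have hcpos : (0:ℝ) < (2:ℝ) ^ (-(2*β)) := Real.rpow_pos_of_pos (by norm_num) _
  ext x
  simp only [Set.mem_preimage, Set.mem_setOf_eq, aux_pl0_Tmap]
  refine exists_congr fun i => ?_
  rw [← Finset.mul_sum, show τ * ((2:ℝ) ^ (-(2*β)) * ∑ j, pl0 β (x j) 0 -
      (2:ℝ) ^ (-(2*β)) * pl0 β (x i) 0)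
    = (2:ℝ) ^ (-(2*β)) * (τ * ((∑ j, pl0 β (x j) 0) - pl0 β (x i) 0)) by ring]
  exact mul_lt_mul_iff_right₀ hcpos

lemma aux_event_measurable (β τ : ℝ) (y : E2) (n : ℕ) :
    MeasurableSet {x : Fin n → E2 | ∃ i,
      pl0 β (x i) y > τ * ((∑ j, pl0 β (x j) y) - pl0 β (x i) y)} := by
  have hpl : ∀ i : Fin n, Measurable fun x : Fin n → E2 => pl0 β (x i) y := by
    intro i
    exact (((measurable_pi_apply i).sub measurable_const).norm).pow measurable_const
  have : {x : Fin n → E2 | ∃ i,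
      pl0 β (x i) y > τ * ((∑ j, pl0 β (x j) y) - pl0 β (x i) y)}
    = ⋃ i, {x : Fin n → E2 |
        τ * ((∑ j, pl0 β (x j) y) - pl0 β (x i) y) < pl0 β (x i) y} := by
    ext x; simp [Set.mem_iUnion]
  rw [this]
  refine MeasurableSet.iUnion fun i => measurableSet_lt ?_ (hpl i)
  exact (measurable_const.mul ((Finset.measurable_sum _ fun j _ => hpl j).sub (hpl i)))

/-- Corollary 3: when the noise is zero and the transmitters and receivers are at the
same height, the SINR coverage of a corner user equals that of a center user. -/
theorem corner_coverage_eq_center_coverage_zero_height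
    (a β lam τ : ℝ) (ha : 0 < a) (hβ : 0 < β) (hlam : 0 < lam) (hτ : 0 < τ) :
    cov0 β lam a τ (corner a) = cov0 β lam a τ 0 := by
  unfold cov0
  refine tsum_congr fun n => ?_
  congr 1
  congr 1
  have hmp : MeasurePreserving (fun (x : Fin n → E2) i => Tmap a (x i))
      (Measure.pi fun _ : Fin n => volume.restrict (Sq 0 a))
      (Measure.pi fun _ : Fin n => volume.restrict (Sq 0 a)) :=
    MeasureTheory.measurePreserving_pi _ _ fun _ => aux_T_preserving a ha
  have hpre := hmp.measure_preimage
    (aux_event_measurable β τ (corner a) n).nullMeasurableSet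
  rw [aux_event_preimage a β τ n] at hpre
  exact hpre.symm

end
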